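/- In the Young–Fibonacci order, for any word u, the words covering u (i.e., the y > u with no z satisfying u < z < y) are exactly those obtained from u by either (1) replacing the leftmost 1 in u by a 2, or (2) inserting a 1 at any position to the left of the leftmost 1 of u (or anywhere if u contains no 1). -/

import Mathlib

inductive YFDigit : Type
  | one : YFDigit
  | two : YFDigit
  deriving DecidableEq, Repr

abbrev YFWord := List YFDigit

namespace YFWord

/-- value of a digit -/
def digitVal : YFDigit → ℕ
  | .one => 1
  | .two => 2

/-- digit sum of a word -/
def dsum (v : YFWord) : ℕ := (v.map digitVal).sum

/-- number of 2's in a word -/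
def twos (v : YFWord) : ℕ := v.count YFDigit.two

/-- longest common prefix of two lists -/
def commonPrefix : YFWord → YFWord → YFWord
  | a :: x, b :: y => if a = b then a :: commonPrefix x y else []
  | _, _ => []

/-- longest common suffix -/
def lcs (x y : YFWord) : YFWord := (commonPrefix x.reverse y.reverse).reverse

/-- the prefix of `x` remaining after deleting the longest common suffix of `x` and `y` -/
def rem (x y : YFWord) : YFWord := x.take (x.length - (lcs x y).length)

/-- the Young–Fibonacci order: x ≤ y iff, after removing the longest common suffix,
the remaining prefix of `y` has at least as many 2's as the remaining prefix of `x` has digits -/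
def yfLE (x y : YFWord) : Prop := (rem x y).length ≤ twos (rem y x)

/-- strict Young–Fibonacci order -/
def yfLT (x y : YFWord) : Prop := yfLE x y ∧ ¬ yfLE y x

/-- `y` covers `x` in the Young–Fibonacci order -/
def covers (x y : YFWord) : Prop := yfLT x y ∧ ∀ z, ¬ (yfLT x z ∧ yfLT z y)

end YFWord

namespace YFWord

-- basic lemmas
lemma commonPrefix_prefix_left : ∀ x y : YFWord, commonPrefix x y <+: x
  | [], y => by simp [commonPrefix]
  | a :: x, [] => by simp [commonPrefix]
  | a :: x, b :: y => by
      by_cases h : a = b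
      · simpa [commonPrefix, h] using commonPrefix_prefix_left x y
      · simp [commonPrefix, h]

lemma commonPrefix_comm : ∀ x y : YFWord, commonPrefix x y = commonPrefix y x
  | [], [] => rfl
  | [], b :: y => rfl
  | a :: x, [] => rfl
  | a :: x, b :: y => by
      by_cases h : a = b
      · subst h; simp [commonPrefix, commonPrefix_comm x y]
      · simp [commonPrefix, h, Ne.symm h]

lemma prefix_commonPrefix : ∀ (p x y : YFWord), p <+: x → p <+: y → p <+: commonPrefix x y
  | [], _, _, _, _ => by simp
  | c :: p, x, y, hx, hy => by
      obtain ⟨tx, rfl⟩ := hx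
      obtain ⟨ty, hy'⟩ := hy
      cases y with
      | nil => simp at hy'
      | cons b y =>
        rw [List.cons_append] at hy'
        obtain ⟨rfl, hy2⟩ := List.cons_eq_cons.mp hy'
        have := prefix_commonPrefix p (p ++ tx) y ⟨tx, rfl⟩ ⟨ty, hy2⟩
        obtain ⟨t, ht⟩ := this
        exact ⟨t, by simp [commonPrefix, ← ht]⟩


lemma lcs_suffix_left (x y : YFWord) : lcs x y <:+ x := by
  have h := commonPrefix_prefix_left x.reverse y.reverse
  rw [lcs, ← List.reverse_suffix] at *
  simpa using h

lemma lcs_comm (x y : YFWord) : lcs x y = lcs y x := by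
  rw [lcs, lcs, commonPrefix_comm]

lemma lcs_suffix_right (x y : YFWord) : lcs x y <:+ y := by
  rw [lcs_comm]; exact lcs_suffix_left y x

lemma suffix_lcs {s : YFWord} (x y : YFWord) (hx : s <:+ x) (hy : s <:+ y) :
    s <:+ lcs x y := by
  rw [← List.reverse_prefix] at hx hy
  rw [lcs, ← List.reverse_prefix, List.reverse_reverse]
  exact prefix_commonPrefix _ _ _ hx hy

lemma rem_append_lcs (x y : YFWord) : rem x y ++ lcs x y = x := by
  obtain ⟨p, hp⟩ := lcs_suffix_left x y
  have hlen : x.length - (lcs x y).length = p.length := by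
    have := congrArg List.length hp
    simp at this
    omega
  have h1 : rem x y = p := by rw [rem, hlen, ← hp, List.take_left]
  rw [h1, hp]

lemma rem_eq_of_decomp {x y p : YFWord} (h : x = p ++ lcs x y) : rem x y = p :=
  List.append_cancel_right (by rw [rem_append_lcs, ← h])

lemma twos_le_length (v : YFWord) : twos v ≤ v.length := List.count_le_length

lemma twos_append (a b : YFWord) : twos (a ++ b) = twos a + twos b := List.count_append

lemma dsum_append (a b : YFWord) : dsum (a ++ b) = dsum a + dsum b := by
  simp [dsum]

lemma dsum_eq (v : YFWord) : dsum v = v.length + twos v := by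
  induction v with
  | nil => rfl
  | cons d v ih =>
    cases d <;> simp [dsum, twos, digitVal, List.count_cons] at * <;> omega

-- key: a decomposition with common suffix witnesses ≤
lemma le_of_decomp (px py c : YFWord) (h : px.length ≤ twos py) :
    yfLE (px ++ c) (py ++ c) := by
  set x := px ++ c with hx
  set y := py ++ c with hy
  have hc : c <:+ lcs x y := suffix_lcs x y ⟨px, rfl⟩ ⟨py, rfl⟩
  obtain ⟨d, hd⟩ := hc
  have hxd : x = (rem x y) ++ lcs x y := (rem_append_lcs x y).symm
  have hyd : y = (rem y x) ++ lcs y x := (rem_append_lcs y x).symm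
  rw [lcs_comm] at hyd
  have hpx : px = rem x y ++ d := by
    have : px ++ c = (rem x y ++ d) ++ c := by
      rw [List.append_assoc, hd, ← hxd]
    exact List.append_cancel_right this
  have hpy : py = rem y x ++ d := by
    have : py ++ c = (rem y x ++ d) ++ c := by
      rw [List.append_assoc, hd, ← hyd]
    exact List.append_cancel_right this
  rw [yfLE]
  have h1 : px.length = (rem x y).length + d.length := by rw [hpx]; simp
  have h2 : twos py = twos (rem y x) + twos d := by rw [hpy, twos_append]
  have h3 : twos d ≤ d.length := twos_le_length d
  omega

lemma dsum_le_of_le {x y : YFWord} (h : yfLE x y) : dsum x ≤ dsum y := by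
  have hx := (rem_append_lcs x y).symm
  have hy := (rem_append_lcs y x).symm
  rw [yfLE] at h
  have h1 := twos_le_length (rem x y)
  have h2 := twos_le_length (rem y x)
  have ex : dsum (rem x y) + dsum (lcs x y) = dsum x := by
    rw [← dsum_append, rem_append_lcs]
  have ey : dsum (rem y x) + dsum (lcs x y) = dsum y := by
    rw [← dsum_append, lcs_comm, rem_append_lcs]
  have := dsum_eq (rem x y)
  have := dsum_eq (rem y x)
  omega

lemma dsum_lt_of_lt {x y : YFWord} (h : yfLT x y) : dsum x < dsum y := by
  obtain ⟨h1, h2⟩ := h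
  have hx := (rem_append_lcs x y).symm
  have hy := (rem_append_lcs y x).symm
  rw [lcs_comm] at hy
  rw [yfLE] at h1 h2
  push_neg at h2
  have h3 := twos_le_length (rem x y)
  have h4 := twos_le_length (rem y x)
  have ex : dsum (rem x y) + dsum (lcs x y) = dsum x := by
    rw [← dsum_append, rem_append_lcs]
  have ey : dsum (rem y x) + dsum (lcs x y) = dsum y := by
    rw [← dsum_append, lcs_comm, rem_append_lcs]
  have := dsum_eq (rem x y)
  have := dsum_eq (rem y x)
  omega

lemma yfLE_refl (x : YFWord) : yfLE x x := by
  have : x <:+ lcs x x := suffix_lcs x x (List.suffix_refl x) (List.suffix_refl x)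
  have hl : lcs x x = x := List.IsSuffix.eq_of_length this (by
    have := (lcs_suffix_left x x).length_le
    have := this.antisymm (List.IsSuffix.length_le ‹x <:+ lcs x x›)
    omega) |>.symm
  rw [yfLE, rem, hl]
  simp

lemma yf_antisymm {x y : YFWord} (h1 : yfLE x y) (h2 : yfLE y x) : x = y := by
  rw [yfLE] at h1 h2
  have h3 := twos_le_length (rem x y)
  have h4 := twos_le_length (rem y x)
  have e1 : twos (rem x y) = (rem x y).length := by omega
  have e2 : twos (rem y x) = (rem y x).length := by omega
  have e3 : (rem x y).length = (rem y x).length := by omega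
  -- both rem are all-twos of equal length, hence equal; must be empty by maximality
  have hx := (rem_append_lcs x y).symm
  have hy := (rem_append_lcs y x).symm
  rw [lcs_comm] at hy
  have hall1 : ∀ d ∈ rem x y, d = YFDigit.two := by
    intro d hd
    exact (List.count_eq_length.mp e1 d hd).symm
  have hall2 : ∀ d ∈ rem y x, d = YFDigit.two := by
    intro d hd
    exact (List.count_eq_length.mp e2 d hd).symm
  rcases List.eq_nil_or_concat (rem x y) with hn | ⟨rx', d1, hd1⟩
  · have hn2 : rem y x = [] := List.eq_nil_of_length_eq_zero (by rw [← e3, hn]; simp)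
    rw [hn] at hx; rw [hn2] at hy
    simp at hx hy
    exact hx.trans hy.symm
  · rcases List.eq_nil_or_concat (rem y x) with hn2 | ⟨ry', d2, hd2⟩
    · rw [hn2] at e3; rw [hd1] at e3; simp at e3
    · exfalso
      have hd1' : d1 = YFDigit.two := hall1 d1 (by rw [hd1]; simp)
      have hd2' : d2 = YFDigit.two := hall2 d2 (by rw [hd2]; simp)
      have hs1 : YFDigit.two :: lcs x y <:+ x := by
        refine ⟨rx', ?_⟩
        conv_rhs => rw [hx, hd1, hd1']
        simp
      have hs2 : YFDigit.two :: lcs x y <:+ y := by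
        refine ⟨ry', ?_⟩
        conv_rhs => rw [hy, hd2, hd2']
        simp
      have := (suffix_lcs x y hs1 hs2).length_le
      simp at this

-- maximality: rem x y and rem y x cannot end with the same digit
lemma not_same_last {x y : YFWord} {d : YFDigit} {rx' ry' : YFWord}
    (h1 : rem x y = rx' ++ [d]) (h2 : rem y x = ry' ++ [d]) : False := by
  have hx := (rem_append_lcs x y).symm
  have hy := (rem_append_lcs y x).symm
  rw [lcs_comm] at hy
  have hs1 : d :: lcs x y <:+ x := by
    refine ⟨rx', ?_⟩
    conv_rhs => rw [hx, h1]
    simp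
  have hs2 : d :: lcs x y <:+ y := by
    refine ⟨ry', ?_⟩
    conv_rhs => rw [hy, h2]
    simp
  have := (suffix_lcs x y hs1 hs2).length_le
  simp at this


lemma twos_of_no_one {a : YFWord} (h : a.count YFDigit.one = 0) : twos a = a.length := by
  induction a with
  | nil => rfl
  | cons d t ih =>
    cases d <;> simp [twos, List.count_cons] at h ⊢ <;>
      simp [twos] at ih <;> omega

lemma lt_cover1 {a b : YFWord} (h : a.count YFDigit.one = 0) :
    yfLT (a ++ YFDigit.one :: b) (a ++ YFDigit.two :: b) := by
  constructor
  · have := le_of_decomp (a ++ [YFDigit.one]) (a ++ [YFDigit.two]) b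
      (by have := twos_of_no_one h
          simp [twos_append, twos, List.count_cons] at this ⊢
          omega)
    simpa using this
  · intro hle
    have := dsum_le_of_le hle
    simp [dsum_append, dsum, digitVal] at this

lemma lt_cover2 {a b : YFWord} (h : a.count YFDigit.one = 0) :
    yfLT (a ++ b) (a ++ YFDigit.one :: b) := by
  constructor
  · have := le_of_decomp a (a ++ [YFDigit.one]) b
      (by have := twos_of_no_one h
          simp [twos_append, twos, List.count_cons] at this ⊢
          omega)
    simpa using this
  · intro hle
    have := dsum_le_of_le hle
    simp [dsum_append, dsum, digitVal] at this

lemma exists_leftmost {v : YFWord} (h : v.count YFDigit.one ≠ 0) :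
    ∃ a b : YFWord, v = a ++ YFDigit.one :: b ∧ a.count YFDigit.one = 0 := by
  induction v with
  | nil => simp [List.count_nil] at h
  | cons d t ih =>
    cases d with
    | one => exact ⟨[], t, by simp, by simp⟩
    | two =>
      have h' : t.count YFDigit.one ≠ 0 := by
        simpa [List.count_cons] using h
      obtain ⟨a, b, h1, h2⟩ := ih h'
      exact ⟨YFDigit.two :: a, b, by simp [h1], by simpa [List.count_cons] using h2⟩

/-- the key step lemma: if `u < y` there is a cover `y'` of `u` below `y` -/
lemma step {u y : YFWord} (h : yfLT u y) :
    ∃ y' : YFWord,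
      ((∃ a b : YFWord, u = a ++ (YFDigit.one :: b) ∧ a.count YFDigit.one = 0 ∧
        y' = a ++ (YFDigit.two :: b)) ∨
      (∃ a b : YFWord, u = a ++ b ∧ a.count YFDigit.one = 0 ∧
        y' = a ++ (YFDigit.one :: b))) ∧ yfLT u y' ∧ yfLE y' y := by
  obtain ⟨h1, h2⟩ := h
  have hu : rem u y ++ lcs u y = u := rem_append_lcs u y
  have hy : rem y u ++ lcs u y = y := by rw [lcs_comm]; exact rem_append_lcs y u
  rw [yfLE] at h1
  by_cases hca : (rem u y).count YFDigit.one = 0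
  · -- rem u y is all twos
    have htw : twos (rem u y) = (rem u y).length := twos_of_no_one hca
    rcases lt_or_eq_of_le h1 with hlt | heq
    · -- strict: insert 1 at front
      refine ⟨YFDigit.one :: u, Or.inr ⟨[], u, by simp, by simp, by simp⟩, ?_, ?_⟩
      · simpa using lt_cover2 (a := []) (b := u) (by simp)
      · have := le_of_decomp (YFDigit.one :: rem u y) (rem y u) (lcs u y)
          (by simp; omega)
        rw [hy] at this
        have e : (YFDigit.one :: rem u y) ++ lcs u y = YFDigit.one :: u := by
          rw [List.cons_append, hu]
        rwa [e] at this
    · -- equality case: rem y u ends with a one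
      have hry : rem y u ≠ [] := by
        intro hn
        rw [hn] at hy h1
        simp [twos] at h1
        have hun : rem u y = [] := h1
        rw [hun] at hu
        simp at hu hy
        apply h2
        have huy : u = y := hu.symm.trans hy
        rw [huy]
        exact yfLE_refl _
      obtain ⟨w, d, hw⟩ := (List.eq_nil_or_concat (rem y u)).resolve_left hry
      have hd : d = YFDigit.one := by
        cases d
        · rfl
        · exfalso
          rcases List.eq_nil_or_concat (rem u y) with hn | ⟨rx', d1, hx1⟩
          · rw [hn, hw] at heq
            simp [twos, List.concat_eq_append, List.count_append, List.count_cons] at heq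
          · have hd1 : d1 = YFDigit.two := by
              cases d1
              · exfalso
                rw [hx1] at hca
                simp [List.concat_eq_append, List.count_append, List.count_cons] at hca
              · rfl
            exact not_same_last (x := u) (y := y) (d := YFDigit.two)
              (rx' := rx') (ry' := w)
              (by rw [hx1, hd1]; exact List.concat_eq_append)
              (by rw [hw]; exact List.concat_eq_append)
      subst hd
      refine ⟨rem u y ++ YFDigit.one :: lcs u y,
        Or.inr ⟨rem u y, lcs u y, hu.symm, hca, rfl⟩, ?_, ?_⟩
      · have := lt_cover2 (a := rem u y) (b := lcs u y) hca
        rwa [hu] at this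
      · have := le_of_decomp (rem u y) w (YFDigit.one :: lcs u y)
          (by
            have : twos (rem y u) = twos w := by
              rw [hw]; simp [twos, List.count_concat]
            omega)
        have ey : w ++ (YFDigit.one :: lcs u y) = y := by
          conv_rhs => rw [← hy, hw]
          simp
        rwa [ey] at this
  · -- rem u y contains a one: replace leftmost one by two
    obtain ⟨a, b, hab, ha⟩ := exists_leftmost hca
    refine ⟨a ++ YFDigit.two :: (b ++ lcs u y),
      Or.inl ⟨a, b ++ lcs u y, ?_, ha, rfl⟩, ?_, ?_⟩
    · conv_lhs => rw [← hu, hab]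
      simp
    · have := lt_cover1 (a := a) (b := b ++ lcs u y) ha
      have e : a ++ YFDigit.one :: (b ++ lcs u y) = u := by
        conv_rhs => rw [← hu, hab]
        simp
      rwa [e] at this
    · have := le_of_decomp (a ++ YFDigit.two :: b) (rem y u) (lcs u y)
        (by
          have : (a ++ YFDigit.two :: b).length = (rem u y).length := by
            rw [hab]; simp
          omega)
      rw [hy] at this
      have e : (a ++ YFDigit.two :: b) ++ lcs u y = a ++ YFDigit.two :: (b ++ lcs u y) := by
        simp
      rwa [e] at this

end YFWord


open YFWord

theorem yf_covers_iff (u y : YFWord) :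
    covers u y ↔
      (∃ a b : YFWord, u = a ++ (YFDigit.one :: b) ∧ a.count YFDigit.one = 0 ∧
        y = a ++ (YFDigit.two :: b)) ∨
      (∃ a b : YFWord, u = a ++ b ∧ a.count YFDigit.one = 0 ∧
        y = a ++ (YFDigit.one :: b)) := by
  constructor
  · rintro ⟨hlt, hmax⟩
    obtain ⟨y', hform, hlt', hle'⟩ := step hlt
    have hyy : y' = y := by
      by_contra hne
      have hny : ¬ yfLE y y' := fun h => hne (yf_antisymm hle' h)
      exact hmax y' ⟨hlt', hle', hny⟩
    rw [← hyy]
    exact hform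
  · intro hform
    have hlt : yfLT u y := by
      rcases hform with ⟨a, b, hu, ha, hy⟩ | ⟨a, b, hu, ha, hy⟩
      · rw [hu, hy]; exact lt_cover1 ha
      · rw [hu, hy]; exact lt_cover2 ha
    refine ⟨hlt, ?_⟩
    rintro z ⟨h1, h2⟩
    have d1 := dsum_lt_of_lt h1
    have d2 := dsum_lt_of_lt h2
    have hd : dsum y = dsum u + 1 := by
      rcases hform with ⟨a, b, hu, hy⟩ | ⟨a, b, hu, hy⟩ <;>
        rw [hu, hy.2] <;> simp [dsum_append, dsum, digitVal] <;> omega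
    omega
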